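/- arXiv:1701.02091 — 5 statements merged into one kernel-verified Lean document; each statement's English description precedes it below -/
import Mathlib

section
/- Let X be a Banach space and K : X → X a bounded linear operator such that K² is compact. Then I + K is a Fredholm operator of index zero (Nikolsky's criterion). -/
set_option linter.unusedSectionVars false
set_option maxHeartbeats 1000000

open Metric Module Filter Topology

namespace NikolskyAux

variable {X : Type*} [NormedAddCommGroup X] [NormedSpace ℝ X]

/-- Riesz-type lemma: a unit vector in `G` that is `1/2`-far from the closed subspace `F ≤ G`. -/
lemma exists_unit_far {F G : Submodule ℝ X} (hFc : IsClosed (F : Set X)) (hle : F ≤ G)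
    {x : X} (hxG : x ∈ G) (hxF : x ∉ F) :
    ∃ u, u ∈ G ∧ ‖u‖ = 1 ∧ ∀ w ∈ F, (1:ℝ)/2 ≤ ‖u - w‖ := by
  have hFne : (F : Set X).Nonempty := ⟨0, F.zero_mem⟩
  have hd : 0 < infDist x (F : Set X) := by
    exact (hFc.notMem_iff_infDist_pos hFne).1 hxF
  set d := infDist x (F : Set X) with hdd
  obtain ⟨y, hyF, hyd⟩ := (infDist_lt_iff hFne).1 (show d < 2 * d by linarith)
  obtain ⟨z, hz⟩ : ∃ z, z = x - y := ⟨_, rfl⟩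
  have hzlow : ∀ w ∈ F, d ≤ ‖z - w‖ := by
    intro w hw
    have := infDist_le_dist_of_mem (x := x) (F.add_mem hyF hw)
    rw [dist_eq_norm] at this
    calc d ≤ ‖x - (y + w)‖ := this
    _ = ‖z - w‖ := by rw [hz, sub_sub]
  have hznorm : d ≤ ‖z‖ := by simpa using hzlow 0 F.zero_mem
  have hzup : ‖z‖ < 2 * d := by rw [hz, ← dist_eq_norm]; exact hyd
  have hz0 : 0 < ‖z‖ := lt_of_lt_of_le hd hznorm
  refine ⟨‖z‖⁻¹ • z, G.smul_mem _ (hz ▸ G.sub_mem hxG (hle hyF)), ?_, ?_⟩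
  · rw [norm_smul, norm_inv, norm_norm, inv_mul_cancel₀ hz0.ne']
  · intro w hw
    have key : ‖z‖⁻¹ • z - w = ‖z‖⁻¹ • (z - ‖z‖ • w) := by
      rw [smul_sub, inv_smul_smul₀ hz0.ne']
    rw [key, norm_smul, norm_inv, norm_norm]
    have h1 : d ≤ ‖z - ‖z‖ • w‖ := hzlow _ (F.smul_mem _ hw)
    have h2 : (2*d)⁻¹ * d ≤ ‖z‖⁻¹ * ‖z - ‖z‖ • w‖ := by
      apply mul_le_mul _ h1 hd.le (by positivity)
      exact (inv_le_inv₀ (by linarith) hz0).2 hzup.le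
    have h3 : (1:ℝ)/2 = (2*d)⁻¹ * d := by field_simp
    linarith


/-- Bounded sequences have a subsequence whose image under a compact operator converges. -/
lemma exists_tendsto_subseq (C : X →L[ℝ] X) (hC : IsCompactOperator ⇑C) {b : ℝ}
    (z : ℕ → X) (hz : ∀ n, ‖z n‖ ≤ b) :
    ∃ v : X, ∃ φ : ℕ → ℕ, StrictMono φ ∧
      Tendsto (fun n => C (z (φ n))) atTop (𝓝 v) := by
  have hC' : IsCompactOperator ⇑(C : X →ₗ[ℝ] X) := by simpa using hC
  obtain ⟨M, hM, hMsub⟩ := hC'.image_subset_compact_of_bounded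
    (S := closedBall (0:X) b) (isBounded_closedBall)
  have hmem : ∀ n, C (z n) ∈ M := fun n =>
    hMsub ⟨z n, mem_closedBall_zero_iff.2 (hz n), rfl⟩
  obtain ⟨v, -, φ, hφ, htend⟩ := hM.tendsto_subseq hmem
  exact ⟨v, φ, hφ, htend⟩

variable [CompleteSpace X]

lemma pow_sub_one_compact {A : X →L[ℝ] X} (h : IsCompactOperator ⇑(A - 1)) (n : ℕ) :
    IsCompactOperator ⇑(A ^ n - 1) := by
  induction n with
  | zero =>
    simp only [pow_zero, sub_self]
    simpa using isCompactOperator_zero (M₁ := X) (M₂ := X)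
  | succ n ih =>
    have e : A ^ (n+1) - 1 = (A ^ n - 1) * A + (A - 1) := by
      rw [pow_succ, sub_mul, one_mul]; abel
    have h1 : IsCompactOperator (⇑(A ^ n - 1) ∘ ⇑A) := ih.comp_clm A
    have h2 : IsCompactOperator (⇑(A ^ n - 1) ∘ ⇑A + ⇑(A - 1)) := h1.add h
    convert h2 using 1
    ext x
    simp [e, ContinuousLinearMap.mul_apply]

/-- The kernel of `A = 1 + compact` is finite-dimensional. -/
lemma ker_fd {A : X →L[ℝ] X} (h : IsCompactOperator ⇑(A - 1)) :
    FiniteDimensional ℝ (LinearMap.ker (A : X →ₗ[ℝ] X)) := by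
  have h' : IsCompactOperator ⇑((1 - A : X →L[ℝ] X) : X →ₗ[ℝ] X) := by
    have := h.neg
    convert this using 1
    · rfl
    ext x
    simp
  obtain ⟨M, hM, hMsub⟩ := h'.image_closedBall_subset_compact 1
  set S : Set X := (LinearMap.ker (A : X →ₗ[ℝ] X) : Set X) ∩ closedBall 0 1 with hS
  have hSclosed : IsClosed S := (ContinuousLinearMap.isClosed_ker A).inter Metric.isClosed_closedBall
  have hSsub : S ⊆ M := by
    rintro x ⟨hx1, hx2⟩
    have hx : A x = 0 := hx1
    have : (1 - A : X →L[ℝ] X) x = x := by simp [hx]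
    exact hMsub ⟨x, hx2, this⟩
  have hScompact : IsCompact S := hM.of_isClosed_subset hSclosed hSsub
  refine FiniteDimensional.of_isCompact_closedBall₀ (𝕜 := ℝ) one_pos ?_
  have himg : Subtype.val '' (closedBall (0 : LinearMap.ker (A : X →ₗ[ℝ] X)) 1) = S := by
    ext x
    constructor
    · rintro ⟨y, hy, rfl⟩
      exact ⟨y.2, by simpa [mem_closedBall_zero_iff] using hy⟩
    · rintro ⟨hx1, hx2⟩
      exact ⟨⟨x, hx1⟩, by simpa [mem_closedBall_zero_iff] using hx2, rfl⟩
  rw [Topology.IsEmbedding.isCompact_iff Topology.IsEmbedding.subtypeVal, himg]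
  exact hScompact

/-- The range of `A = 1 + compact` is closed. -/
lemma range_closed {A : X →L[ℝ] X} (h : IsCompactOperator ⇑(A - 1)) :
    IsClosed (LinearMap.range (A : X →ₗ[ℝ] X) : Set X) := by
  haveI : FiniteDimensional ℝ (LinearMap.ker (A : X →ₗ[ℝ] X)) := ker_fd h
  set N := LinearMap.ker (A : X →ₗ[ℝ] X) with hN
  have hNclosed : IsClosed (N : Set X) := N.closed_of_finiteDimensional
  have hNne : (N : Set X).Nonempty := ⟨0, N.zero_mem⟩
  have hC : IsCompactOperator ⇑(1 - A : X →L[ℝ] X) := by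
    have := h.neg
    convert this using 1
    · rfl
    ext x; simp
  -- Step 1: `A` is bounded below modulo its kernel.
  have step1 : ∃ c : ℝ, 0 < c ∧ ∀ x : X, ∃ y ∈ N, ‖x - y‖ ≤ c * ‖A x‖ := by
    by_contra hcon
    push_neg at hcon
    choose x hx using fun n : ℕ => hcon ((n:ℝ)+1) (by positivity)
    have hAx : ∀ n, 0 < ‖A (x n)‖ := by
      intro n
      rcases (norm_nonneg (A (x n))).lt_or_eq with h' | h'
      · exact h'
      · exfalso
        have hxN : x n ∈ N := by
          rw [hN]; exact LinearMap.mem_ker.2 (norm_eq_zero.1 h'.symm)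
        have := hx n (x n) hxN
        rw [sub_self, norm_zero, ← h'] at this
        norm_num at this
    set D : ℕ → ℝ := fun n => infDist (x n) (N : Set X) with hD
    have hDlow : ∀ n : ℕ, ((n:ℝ)+1) * ‖A (x n)‖ ≤ D n := by
      intro n
      by_contra hlt
      push_neg at hlt
      obtain ⟨y, hyN, hyd⟩ := (infDist_lt_iff hNne).1 hlt
      rw [dist_eq_norm] at hyd
      exact absurd hyd (not_lt.2 (hx n y hyN).le)
    have hDpos : ∀ n, 0 < D n := fun n =>
      lt_of_lt_of_le (mul_pos (by positivity) (hAx n)) (hDlow n)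
    have hsel : ∀ n, ∃ y ∈ (N : Set X), dist (x n) y < 2 * D n := fun n =>
      (infDist_lt_iff hNne).1 (by linarith [hDpos n])
    choose y hyN hyd using hsel
    set r : ℕ → ℝ := fun n => ‖x n - y n‖ with hr
    have hrD : ∀ n, D n ≤ r n := by
      intro n
      have := infDist_le_dist_of_mem (x := x n) (hyN n)
      rwa [dist_eq_norm] at this
    have hrpos : ∀ n, 0 < r n := fun n => lt_of_lt_of_le (hDpos n) (hrD n)
    have hr2D : ∀ n, r n < 2 * D n := by
      intro n
      have := hyd n
      rwa [dist_eq_norm] at this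
    set z : ℕ → X := fun n => (r n)⁻¹ • (x n - y n) with hz
    have hznorm : ∀ n, ‖z n‖ = 1 := by
      intro n
      rw [hz]
      simp only [norm_smul, norm_inv, Real.norm_eq_abs, abs_of_pos (hrpos n)]
      exact inv_mul_cancel₀ (hrpos n).ne'
    have hAy : ∀ n, A (y n) = 0 := fun n => (hyN n : y n ∈ N)
    have hAz : ∀ n : ℕ, ‖A (z n)‖ ≤ 1 / ((n:ℝ)+1) := by
      intro n
      have e : A (z n) = (r n)⁻¹ • A (x n) := by
        rw [hz]; simp [map_smul, map_sub, hAy n]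
      rw [e, norm_smul, norm_inv, Real.norm_eq_abs, abs_of_pos (hrpos n)]
      rw [div_eq_mul_inv, one_mul]
      have h1 : ‖A (x n)‖ ≤ D n / ((n:ℝ)+1) := by
        rw [le_div_iff₀ (by positivity)]
        linarith [hDlow n]
      have h2 : (r n)⁻¹ ≤ (D n)⁻¹ := (inv_le_inv₀ (hrpos n) (hDpos n)).2 (hrD n)
      calc (r n)⁻¹ * ‖A (x n)‖ ≤ (D n)⁻¹ * (D n / ((n:ℝ)+1)) := by
            apply mul_le_mul h2 h1 (norm_nonneg _) (inv_nonneg.2 (hDpos n).le)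
        _ = ((n:ℝ)+1)⁻¹ := by
            rw [div_eq_mul_inv, ← mul_assoc, inv_mul_cancel₀ (hDpos n).ne', one_mul]
    have hfar : ∀ n, ∀ w ∈ N, (1:ℝ)/2 ≤ ‖z n - w‖ := by
      intro n w hw
      have e : z n - w = (r n)⁻¹ • (x n - (y n + r n • w)) := by
        rw [hz]
        simp only [smul_sub, smul_add, inv_smul_smul₀ (hrpos n).ne']
        abel
      rw [e, norm_smul, norm_inv, Real.norm_eq_abs, abs_of_pos (hrpos n)]
      have h1 : D n ≤ ‖x n - (y n + r n • w)‖ := by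
        have hmem : y n + r n • w ∈ (N : Set X) := N.add_mem (hyN n) (N.smul_mem (r n) hw)
        have := infDist_le_dist_of_mem (x := x n) hmem
        rwa [dist_eq_norm] at this
      have h2 : (2 * D n)⁻¹ ≤ (r n)⁻¹ :=
        (inv_le_inv₀ (by linarith [hDpos n]) (hrpos n)).2 (hr2D n).le
      have h3 : (2 * D n)⁻¹ * D n ≤ (r n)⁻¹ * ‖x n - (y n + r n • w)‖ :=
        mul_le_mul h2 h1 (hDpos n).le (by positivity)
      have h4 : (2 * D n)⁻¹ * D n = 1/2 := by
        field_simp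
        exact div_self (by have := hDpos n; positivity)
      linarith
    obtain ⟨v, φ, hφ, htend⟩ := exists_tendsto_subseq (1 - A) hC z (fun n => (hznorm n).le)
    have hAz0 : Tendsto (fun n => A (z (φ n))) atTop (𝓝 0) := by
      apply squeeze_zero_norm (a := fun n : ℕ => 1 / ((n:ℝ)+1))
      · intro n
        refine (hAz (φ n)).trans ?_
        apply div_le_div_of_nonneg_left one_pos.le (by positivity)
        have h5 : (n:ℝ) ≤ (φ n : ℝ) := Nat.cast_le.2 hφ.le_apply
        linarith
      · exact tendsto_one_div_add_atTop_nhds_zero_nat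
    have hzv : Tendsto (fun n => z (φ n)) atTop (𝓝 v) := by
      have he : ∀ m, z m = A (z m) + (1 - A : X →L[ℝ] X) (z m) := by
        intro m; simp
      have := hAz0.add htend
      rw [zero_add] at this
      exact this.congr (fun n => (he (φ n)).symm)
    have hvN : v ∈ N := by
      have h1 : Tendsto (fun n => A (z (φ n))) atTop (𝓝 (A v)) :=
        (A.continuous.tendsto v).comp hzv
      have : A v = 0 := tendsto_nhds_unique h1 hAz0
      rw [hN]; exact LinearMap.mem_ker.2 this
    obtain ⟨n, hn⟩ := (Metric.tendsto_atTop.1 hzv (1/2) (by norm_num)) 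
    have h6 := hfar (φ n) v hvN
    have hn' := hn n le_rfl
    rw [dist_eq_norm] at hn'
    linarith
  -- Step 2: sequential closedness of the range.
  obtain ⟨c, hc, hbound⟩ := step1
  rw [← isSeqClosed_iff_isClosed]
  intro u L hu hL
  choose x0 hx0 using fun n => LinearMap.mem_range.1 (hu n)
  simp only [ContinuousLinearMap.coe_coe] at hx0
  choose y hyN hyb using fun n => hbound (x0 n)
  set w : ℕ → X := fun n => x0 n - y n with hw
  have hAw : ∀ n, A (w n) = u n := by
    intro n
    have : A (y n) = 0 := hyN n
    rw [hw]; simp [map_sub, this, hx0 n]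
  obtain ⟨b, hb⟩ : ∃ b, ∀ n, ‖u n‖ ≤ b := by
    obtain ⟨b, hb⟩ := hL.norm.bddAbove_range
    exact ⟨b, fun n => hb ⟨n, rfl⟩⟩
  have hwb : ∀ n, ‖w n‖ ≤ c * b := by
    intro n
    refine (hyb n).trans ?_
    rw [hx0 n]
    exact mul_le_mul_of_nonneg_left (hb n) hc.le
  obtain ⟨v, φ, hφ, htend⟩ := exists_tendsto_subseq (1 - A) hC w hwb
  have hwlim : Tendsto (fun n => w (φ n)) atTop (𝓝 (L + v)) := by
    have he : ∀ m, w m = u m + (1 - A : X →L[ℝ] X) (w m) := by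
      intro m
      rw [← hAw m]; simp
    have := (hL.comp hφ.tendsto_atTop).add htend
    exact this.congr (fun n => (he (φ n)).symm)
  have : A (L + v) = L := by
    have h1 : Tendsto (fun n => A (w (φ n))) atTop (𝓝 (A (L + v))) :=
      (A.continuous.tendsto _).comp hwlim
    have h2 : Tendsto (fun n => A (w (φ n))) atTop (𝓝 L) := by
      refine (hL.comp hφ.tendsto_atTop).congr (fun n => (hAw (φ n)).symm)
    exact tendsto_nhds_unique h1 h2
  exact ⟨L + v, this⟩

lemma ker_pow_mono (A : X →L[ℝ] X) {a b : ℕ} (hab : a ≤ b) :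
    LinearMap.ker ((A ^ a : X →L[ℝ] X) : X →ₗ[ℝ] X) ≤ LinearMap.ker ((A ^ b : X →L[ℝ] X) : X →ₗ[ℝ] X) := by
  intro x hx
  have hx' : (A ^ a) x = 0 := hx
  have e : A ^ b = A ^ (b - a) * A ^ a := by
    rw [← pow_add]
    congr 1
    omega
  refine LinearMap.mem_ker.2 ?_
  rw [ContinuousLinearMap.coe_coe, e, ContinuousLinearMap.mul_apply, hx', map_zero]

lemma range_pow_mono (A : X →L[ℝ] X) {a b : ℕ} (hab : a ≤ b) :
    LinearMap.range ((A ^ b : X →L[ℝ] X) : X →ₗ[ℝ] X) ≤ LinearMap.range ((A ^ a : X →L[ℝ] X) : X →ₗ[ℝ] X) := by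
  rintro x ⟨t, rfl⟩
  refine ⟨(A ^ (b - a)) t, ?_⟩
  simp only [ContinuousLinearMap.coe_coe]
  rw [← ContinuousLinearMap.mul_apply, ← pow_add]
  congr 2
  omega

lemma pow_apply_mem_ker_pred (A : X →L[ℝ] X) {n : ℕ} {x : X}
    (hx : x ∈ LinearMap.ker ((A ^ (n+1) : X →L[ℝ] X) : X →ₗ[ℝ] X)) : A x ∈ LinearMap.ker ((A ^ n : X →L[ℝ] X) : X →ₗ[ℝ] X) := by
  refine LinearMap.mem_ker.2 ?_
  rw [ContinuousLinearMap.coe_coe, ← ContinuousLinearMap.mul_apply, ← pow_succ]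
  exact hx

lemma apply_mem_range_succ (A : X →L[ℝ] X) {n : ℕ} {x : X}
    (hx : x ∈ LinearMap.range ((A ^ n : X →L[ℝ] X) : X →ₗ[ℝ] X)) : A x ∈ LinearMap.range ((A ^ (n+1) : X →L[ℝ] X) : X →ₗ[ℝ] X) := by
  obtain ⟨t, rfl⟩ := hx
  exact ⟨t, by simp only [ContinuousLinearMap.coe_coe]; rw [← ContinuousLinearMap.mul_apply, ← pow_succ']⟩

lemma exists_ker_stab {A : X →L[ℝ] X} (h : IsCompactOperator ⇑(A - 1)) :
    ∃ n, LinearMap.ker ((A ^ (n+1) : X →L[ℝ] X) : X →ₗ[ℝ] X) ≤ LinearMap.ker ((A ^ n : X →L[ℝ] X) : X →ₗ[ℝ] X) := by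
  by_contra hcon
  push_neg at hcon
  have hsel : ∀ n : ℕ, ∃ u, u ∈ LinearMap.ker ((A ^ (n+1) : X →L[ℝ] X) : X →ₗ[ℝ] X) ∧ ‖u‖ = 1 ∧
      ∀ w ∈ LinearMap.ker ((A ^ n : X →L[ℝ] X) : X →ₗ[ℝ] X), (1:ℝ)/2 ≤ ‖u - w‖ := by
    intro n
    obtain ⟨x, hxmem, hxnot⟩ := SetLike.not_le_iff_exists.1 (hcon n)
    haveI : FiniteDimensional ℝ (LinearMap.ker ((A ^ n : X →L[ℝ] X) : X →ₗ[ℝ] X)) := ker_fd (pow_sub_one_compact h n)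
    exact exists_unit_far (LinearMap.ker ((A ^ n : X →L[ℝ] X) : X →ₗ[ℝ] X)).closed_of_finiteDimensional
      (ker_pow_mono A (Nat.le_succ n)) hxmem hxnot
  choose u hmem hnorm hfar using hsel
  obtain ⟨v, φ, hφ, htend⟩ := exists_tendsto_subseq (A - 1) h u (fun n => (hnorm n).le)
  have hcauchy := htend.cauchySeq
  obtain ⟨m, hm⟩ := Metric.cauchySeq_iff.1 hcauchy (1/2) (by norm_num)
  set i := φ m with hi
  set j := φ (m+1) with hj
  have hij : i < j := hφ (Nat.lt_succ_self m)
  have hdist := hm (m+1) (Nat.le_succ m) m le_rfl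
  rw [dist_eq_norm] at hdist
  -- ‖(A-1) u_j - (A-1) u_i‖ = ‖u_j - w‖ ≥ 1/2 where w ∈ ker (A ^ j)
  set w := A (u j) - A (u i) + u i with hwdef
  have hwmem : w ∈ LinearMap.ker ((A ^ j : X →L[ℝ] X) : X →ₗ[ℝ] X) := by
    refine Submodule.add_mem _ (Submodule.sub_mem _ ?_ ?_) ?_
    · exact pow_apply_mem_ker_pred A (hmem j)
    · exact ker_pow_mono A hij.le (pow_apply_mem_ker_pred A (hmem i))
    · exact ker_pow_mono A hij (hmem i)
  have he : (A - 1) (u j) - (A - 1) (u i) = -(u j - w) := by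
    simp only [hwdef, ContinuousLinearMap.sub_apply, ContinuousLinearMap.one_apply]
    abel
  rw [he, norm_neg] at hdist
  exact absurd hdist (not_lt.2 (hfar j w hwmem))

lemma exists_range_stab {A : X →L[ℝ] X} (h : IsCompactOperator ⇑(A - 1)) :
    ∃ n, LinearMap.range ((A ^ n : X →L[ℝ] X) : X →ₗ[ℝ] X) ≤ LinearMap.range ((A ^ (n+1) : X →L[ℝ] X) : X →ₗ[ℝ] X) := by
  by_contra hcon
  push_neg at hcon
  have hsel : ∀ n : ℕ, ∃ u, u ∈ LinearMap.range ((A ^ n : X →L[ℝ] X) : X →ₗ[ℝ] X) ∧ ‖u‖ = 1 ∧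
      ∀ w ∈ LinearMap.range ((A ^ (n+1) : X →L[ℝ] X) : X →ₗ[ℝ] X), (1:ℝ)/2 ≤ ‖u - w‖ := by
    intro n
    obtain ⟨x, hxmem, hxnot⟩ := SetLike.not_le_iff_exists.1 (hcon n)
    exact exists_unit_far (range_closed (pow_sub_one_compact h (n+1)))
      (range_pow_mono A (Nat.le_succ n)) hxmem hxnot
  choose u hmem hnorm hfar using hsel
  obtain ⟨v, φ, hφ, htend⟩ := exists_tendsto_subseq (A - 1) h u (fun n => (hnorm n).le)
  have hcauchy := htend.cauchySeq
  obtain ⟨m, hm⟩ := Metric.cauchySeq_iff.1 hcauchy (1/2) (by norm_num)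
  set i := φ m with hi
  set j := φ (m+1) with hj
  have hij : i < j := hφ (Nat.lt_succ_self m)
  have hdist := hm m le_rfl (m+1) (Nat.le_succ m)
  rw [dist_eq_norm] at hdist
  set w := A (u i) - A (u j) + u j with hwdef
  have hwmem : w ∈ LinearMap.range ((A ^ (i+1) : X →L[ℝ] X) : X →ₗ[ℝ] X) := by
    refine Submodule.add_mem _ (Submodule.sub_mem _ ?_ ?_) ?_
    · exact apply_mem_range_succ A (hmem i)
    · exact range_pow_mono A (Nat.succ_le_succ hij.le) (apply_mem_range_succ A (hmem j))
    · exact range_pow_mono A hij (hmem j)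
  have he : (A - 1) (u i) - (A - 1) (u j) = -(u i - w) := by
    simp only [hwdef, ContinuousLinearMap.sub_apply, ContinuousLinearMap.one_apply]
    abel
  rw [he, norm_neg] at hdist
  exact absurd hdist (not_lt.2 (hfar i w hwmem))

lemma ker_stab_of_le (A : X →L[ℝ] X) {n : ℕ}
    (hs : LinearMap.ker ((A ^ (n+1) : X →L[ℝ] X) : X →ₗ[ℝ] X) ≤ LinearMap.ker ((A ^ n : X →L[ℝ] X) : X →ₗ[ℝ] X)) :
    ∀ m, n ≤ m → LinearMap.ker ((A ^ m : X →L[ℝ] X) : X →ₗ[ℝ] X) = LinearMap.ker ((A ^ n : X →L[ℝ] X) : X →ₗ[ℝ] X) := by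
  have hstep : ∀ k : ℕ, LinearMap.ker ((A ^ (n+k+1) : X →L[ℝ] X) : X →ₗ[ℝ] X) ≤ LinearMap.ker ((A ^ (n+k) : X →L[ℝ] X) : X →ₗ[ℝ] X) := by
    intro k x hx
    have h1 : (A ^ (n+1)) ((A ^ k) x) = 0 := by
      rw [← ContinuousLinearMap.mul_apply, ← pow_add]
      have : n + 1 + k = n + k + 1 := by omega
      rw [this]
      exact hx
    have h2 := hs (LinearMap.mem_ker.2 h1)
    refine LinearMap.mem_ker.2 ?_
    have : (A ^ n) ((A ^ k) x) = 0 := h2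
    rw [← ContinuousLinearMap.mul_apply, ← pow_add] at this
    have e : n + k = n + k := rfl
    rw [show (A ^ (n+k)) = (A ^ (n+k)) from rfl]
    rw [show n + k = n + k from rfl]
    simp only [ContinuousLinearMap.coe_coe]
    convert this using 2
  intro m hm
  obtain ⟨k, rfl⟩ := Nat.exists_eq_add_of_le hm
  induction k with
  | zero => rfl
  | succ k ih =>
    have : n + (k+1) = n + k + 1 := by omega
    rw [this, ← ih (Nat.le_add_right n k)]
    exact le_antisymm (hstep k) (ker_pow_mono A (Nat.le_succ _))

lemma range_stab_of_le (A : X →L[ℝ] X) {n : ℕ}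
    (hs : LinearMap.range ((A ^ n : X →L[ℝ] X) : X →ₗ[ℝ] X) ≤ LinearMap.range ((A ^ (n+1) : X →L[ℝ] X) : X →ₗ[ℝ] X)) :
    ∀ m, n ≤ m → LinearMap.range ((A ^ m : X →L[ℝ] X) : X →ₗ[ℝ] X) = LinearMap.range ((A ^ n : X →L[ℝ] X) : X →ₗ[ℝ] X) := by
  have hstep : ∀ k : ℕ, LinearMap.range ((A ^ (n+k) : X →L[ℝ] X) : X →ₗ[ℝ] X) ≤ LinearMap.range ((A ^ (n+k+1) : X →L[ℝ] X) : X →ₗ[ℝ] X) := by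
    rintro k x ⟨t, rfl⟩
    have h1 : (A ^ n) t ∈ LinearMap.range ((A ^ n : X →L[ℝ] X) : X →ₗ[ℝ] X) := ⟨t, rfl⟩
    obtain ⟨s, hs'⟩ := hs h1
    simp only [ContinuousLinearMap.coe_coe] at hs'
    refine ⟨s, ?_⟩
    calc (A ^ (n+k+1)) s = (A ^ k) ((A ^ (n+1)) s) := by
          rw [← ContinuousLinearMap.mul_apply, ← pow_add]
          congr 2
          omega
      _ = (A ^ k) ((A ^ n) t) := by rw [hs']
      _ = (A ^ (n+k)) t := by
          rw [← ContinuousLinearMap.mul_apply, ← pow_add]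
          congr 2
          omega
  intro m hm
  obtain ⟨k, rfl⟩ := Nat.exists_eq_add_of_le hm
  induction k with
  | zero => rfl
  | succ k ih =>
    have e : n + (k+1) = n + k + 1 := by omega
    rw [e, ← ih (Nat.le_add_right n k)]
    exact le_antisymm (range_pow_mono A (Nat.le_succ _)) (hstep k)

lemma sup_closed (F R : Submodule ℝ X) [FiniteDimensional ℝ F] (hR : IsClosed (R : Set X)) :
    IsClosed ((F ⊔ R : Submodule ℝ X) : Set X) := by
  haveI : IsClosed (R : Set X) := hR
  have hcont : Continuous (R.mkQ : X → X ⧸ R) :=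
    AddMonoidHomClass.continuous_of_bound R.mkQ 1
      (fun x => by simpa using Submodule.Quotient.norm_mk_le R x)
  have he : (F ⊔ R : Submodule ℝ X) = Submodule.comap R.mkQ (Submodule.map R.mkQ F) := by
    rw [Submodule.comap_map_eq, Submodule.ker_mkQ]
  rw [he]
  haveI : FiniteDimensional ℝ (Submodule.map R.mkQ F) := Module.Finite.map F R.mkQ
  have hclosed : IsClosed ((Submodule.map R.mkQ F : Submodule ℝ (X ⧸ R)) : Set (X ⧸ R)) :=
    Submodule.closed_of_finiteDimensional _
  exact hclosed.preimage hcont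

end NikolskyAux

/-- An operator `T` on a Banach space is Fredholm of index zero: finite-dimensional
kernel, closed range, and the dimension of the kernel equals the codimension of the range. -/
def IsFredholmIndexZero {X : Type*} [NormedAddCommGroup X] [NormedSpace ℝ X]
    (T : X →L[ℝ] X) : Prop :=
  FiniteDimensional ℝ (LinearMap.ker (T : X →ₗ[ℝ] X)) ∧
  IsClosed (LinearMap.range (T : X →ₗ[ℝ] X) : Set X) ∧
  FiniteDimensional ℝ (X ⧸ LinearMap.range (T : X →ₗ[ℝ] X)) ∧
  Module.finrank ℝ (LinearMap.ker (T : X →ₗ[ℝ] X)) = Module.finrank ℝ (X ⧸ LinearMap.range (T : X →ₗ[ℝ] X))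

/-- Nikolsky's criterion. -/
theorem nikolsky_criterion
    {X : Type*} [NormedAddCommGroup X] [NormedSpace ℝ X] [CompleteSpace X]
    (K : X →L[ℝ] X) (hK : IsCompactOperator ⇑(K.comp K)) :
    IsFredholmIndexZero ((1 : X →L[ℝ] X) + K) := by
  classical
  set T : X →L[ℝ] X := 1 + K with hT
  set S : X →L[ℝ] X := 1 - K with hS
  set A : X →L[ℝ] X := 1 - K * K with hA
  have hTS : T * S = A := by rw [hT, hS, hA]; noncomm_ring
  have hST : S * T = A := by rw [hT, hS, hA]; noncomm_ring
  have hAc : IsCompactOperator ⇑(A - 1) := by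
    have h1 : A - 1 = -(K * K) := by rw [hA]; noncomm_ring
    rw [h1]
    have h2 : ⇑(-(K * K)) = -⇑(K.comp K) := by
      ext x
      simp [ContinuousLinearMap.mul_apply]
    rw [h2]
    exact hK.neg
  obtain ⟨n₁, hn₁⟩ := NikolskyAux.exists_ker_stab hAc
  obtain ⟨n₂, hn₂⟩ := NikolskyAux.exists_range_stab hAc
  set p := n₁ + n₂ + 1 with hp
  have hkerstab := NikolskyAux.ker_stab_of_le A hn₁
  have hrangestab := NikolskyAux.range_stab_of_le A hn₂
  set N := LinearMap.ker ((A ^ p : X →L[ℝ] X) : X →ₗ[ℝ] X) with hN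
  set R := LinearMap.range ((A ^ p : X →L[ℝ] X) : X →ₗ[ℝ] X) with hR
  haveI hNfd : FiniteDimensional ℝ N :=
    NikolskyAux.ker_fd (NikolskyAux.pow_sub_one_compact hAc p)
  have hRclosed : IsClosed (R : Set X) :=
    NikolskyAux.range_closed (NikolskyAux.pow_sub_one_compact hAc p)
  have hker2p : LinearMap.ker ((A ^ (p + p) : X →L[ℝ] X) : X →ₗ[ℝ] X) = N := by
    rw [hN, hkerstab p (by omega), hkerstab (p + p) (by omega)]
  have hrange2p : LinearMap.range ((A ^ (p + p) : X →L[ℝ] X) : X →ₗ[ℝ] X) = R := by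
    rw [hR, hrangestab p (by omega), hrangestab (p + p) (by omega)]
  have hrangesucc : LinearMap.range ((A ^ (p + 1) : X →L[ℝ] X) : X →ₗ[ℝ] X) = R := by
    rw [hR, hrangestab p (by omega), hrangestab (p + 1) (by omega)]
  -- N and R are complementary
  have hinf : N ⊓ R = ⊥ := by
    rw [eq_bot_iff]
    rintro x ⟨hxN, hxR⟩
    obtain ⟨y, rfl⟩ := hxR
    have hy : y ∈ LinearMap.ker ((A ^ (p + p) : X →L[ℝ] X) : X →ₗ[ℝ] X) := by
      refine LinearMap.mem_ker.2 ?_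
      rw [ContinuousLinearMap.coe_coe, pow_add, ContinuousLinearMap.mul_apply]
      exact hxN
    rw [hker2p] at hy
    rw [Submodule.mem_bot]; exact hy
  have hsup : N ⊔ R = ⊤ := by
    rw [eq_top_iff]
    intro x _
    have hx : (A ^ p) x ∈ LinearMap.range ((A ^ (p + p) : X →L[ℝ] X) : X →ₗ[ℝ] X) := by
      rw [hrange2p]; exact ⟨x, rfl⟩
    obtain ⟨y, hy⟩ := hx
    have h1 : x - (A ^ p) y ∈ N := by
      refine LinearMap.mem_ker.2 ?_
      have hxy : (A ^ p) ((A ^ p) y) = (A ^ p) x := by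
        rw [← ContinuousLinearMap.mul_apply, ← pow_add]; exact hy
      rw [ContinuousLinearMap.coe_coe, map_sub, hxy, sub_self]
    have h2 : (A ^ p) y ∈ R := ⟨y, rfl⟩
    have := Submodule.add_mem_sup h1 h2
    simpa using this
  -- invariance under K (hence under T and S)
  have hcommKA : K * A = A * K := by rw [hA]; noncomm_ring
  have hcommKAp : K * A ^ p = A ^ p * K := by
    have : Commute K A := hcommKA
    exact (this.pow_right p).eq
  have hKN : ∀ x ∈ N, K x ∈ N := by
    intro x hx
    refine LinearMap.mem_ker.2 ?_
    have : (A ^ p) (K x) = K ((A ^ p) x) := by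
      rw [← ContinuousLinearMap.mul_apply, ← hcommKAp, ContinuousLinearMap.mul_apply]
    rw [ContinuousLinearMap.coe_coe, this, (show (A ^ p) x = 0 from hx), map_zero]
  have hKR : ∀ x ∈ R, K x ∈ R := by
    rintro x ⟨y, rfl⟩
    refine ⟨K y, ?_⟩
    rw [ContinuousLinearMap.coe_coe, ← ContinuousLinearMap.mul_apply, ← hcommKAp, ContinuousLinearMap.mul_apply]
  have hTN : ∀ x ∈ N, T x ∈ N := by
    intro x hx
    have : T x = x + K x := by rw [hT]; simp
    rw [this]
    exact N.add_mem hx (hKN x hx)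
  have hTR : ∀ x ∈ R, T x ∈ R := by
    intro x hx
    have : T x = x + K x := by rw [hT]; simp
    rw [this]
    exact R.add_mem hx (hKR x hx)
  have hSR : ∀ x ∈ R, S x ∈ R := by
    intro x hx
    have : S x = x - K x := by rw [hS]; simp
    rw [this]
    exact R.sub_mem hx (hKR x hx)
  -- T is bijective on R
  have hkerA_le_N : LinearMap.ker (A : X →ₗ[ℝ] X) ≤ N := by
    have : LinearMap.ker ((A ^ 1 : X →L[ℝ] X) : X →ₗ[ℝ] X) ≤ N := NikolskyAux.ker_pow_mono A (by omega)
    rwa [pow_one] at this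
  have hTinj : ∀ x ∈ R, T x = 0 → x = 0 := by
    intro x hxR hx0
    have hAx : A x = 0 := by
      rw [← hST, ContinuousLinearMap.mul_apply, hx0, map_zero]
    have hxN : x ∈ N := hkerA_le_N (LinearMap.mem_ker.2 hAx)
    have : x ∈ N ⊓ R := ⟨hxN, hxR⟩
    rwa [hinf, Submodule.mem_bot] at this
  have hTsurj : ∀ r ∈ R, ∃ r' ∈ R, T r' = r := by
    intro r hr
    rw [← hrangesucc] at hr
    obtain ⟨y, rfl⟩ := hr
    have h1 : (A ^ (p+1)) y = A ((A ^ p) y) := by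
      rw [← ContinuousLinearMap.mul_apply, ← pow_succ']
    refine ⟨S ((A ^ p) y), hSR _ ⟨y, rfl⟩, ?_⟩
    rw [ContinuousLinearMap.coe_coe, h1, ← hTS, ContinuousLinearMap.mul_apply]
  -- the kernel of T lives in N
  have hkerTN : LinearMap.ker (T : X →ₗ[ℝ] X) ≤ N := by
    intro x hx
    have hx0 : T x = 0 := hx
    have hxmem : x ∈ N ⊔ R := by rw [hsup]; trivial
    obtain ⟨n, hn, r, hr, rfl⟩ := Submodule.mem_sup.1 hxmem
    have h1 : T n + T r = 0 := by rw [← map_add, hx0]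
    have h2 : T r ∈ N ⊓ R := by
      constructor
      · have : T r = -(T n) := by linear_combination (norm := abel) h1  -- might fail
        rw [this]
        exact N.neg_mem (hTN n hn)
      · exact hTR r hr
    rw [hinf, Submodule.mem_bot] at h2
    have hr0 : r = 0 := hTinj r hr h2
    rw [hr0, add_zero]
    exact hn
  haveI hkerTfd : FiniteDimensional ℝ (LinearMap.ker (T : X →ₗ[ℝ] X)) :=
    Submodule.finiteDimensional_of_le hkerTN
  -- range T = T(N) ⊔ R
  set M' := Submodule.map (T : X →ₗ[ℝ] X) N with hM'
  haveI hM'fd : FiniteDimensional ℝ M' := Module.Finite.map N (T : X →ₗ[ℝ] X)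
  have hM'N : M' ≤ N := by
    rintro _ ⟨n, hn, rfl⟩
    exact hTN n hn
  have hrangeT : LinearMap.range (T : X →ₗ[ℝ] X) = M' ⊔ R := by
    apply le_antisymm
    · rintro _ ⟨x, rfl⟩
      have hxmem : x ∈ N ⊔ R := by rw [hsup]; trivial
      obtain ⟨n, hn, r, hr, rfl⟩ := Submodule.mem_sup.1 hxmem
      rw [map_add]
      exact Submodule.add_mem_sup ⟨n, hn, rfl⟩ (hTR r hr)
    · apply sup_le
      · rintro _ ⟨n, hn, rfl⟩
        exact ⟨n, rfl⟩
      · intro r hr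
        obtain ⟨r', _, hr'⟩ := hTsurj r hr
        exact ⟨r', hr'⟩
  have hclosedT : IsClosed ((LinearMap.range (T : X →ₗ[ℝ] X) : Submodule ℝ X) : Set X) := by
    rw [hrangeT]
    exact NikolskyAux.sup_closed M' R hRclosed
  -- the cokernel
  set g : N →ₗ[ℝ] X ⧸ LinearMap.range (T : X →ₗ[ℝ] X) :=
    ((LinearMap.range (T : X →ₗ[ℝ] X)).mkQ).comp N.subtype with hg
  have hgsurj : Function.Surjective g := by
    intro c
    obtain ⟨x, rfl⟩ := Submodule.mkQ_surjective _ c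
    have hxmem : x ∈ N ⊔ R := by rw [hsup]; trivial
    obtain ⟨n, hn, r, hr, rfl⟩ := Submodule.mem_sup.1 hxmem
    refine ⟨⟨n, hn⟩, ?_⟩
    have : g ⟨n, hn⟩ = (LinearMap.range (T : X →ₗ[ℝ] X)).mkQ n := rfl
    rw [this]
    rw [Submodule.mkQ_apply, Submodule.mkQ_apply, Submodule.Quotient.eq]
    have : n - (n + r) = -r := by abel
    rw [this]
    refine Submodule.neg_mem _ ?_
    rw [hrangeT]
    exact Submodule.mem_sup_right hr
  have e := g.quotKerEquivOfSurjective hgsurj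
  haveI hNqfd : FiniteDimensional ℝ (N ⧸ LinearMap.ker g) := inferInstance
  haveI hcokerfd : FiniteDimensional ℝ (X ⧸ LinearMap.range (T : X →ₗ[ℝ] X)) :=
    Module.Finite.equiv e
  -- identify ker g with M'
  have hkerg : LinearMap.ker g = Submodule.comap N.subtype M' := by
    ext x
    simp only [LinearMap.mem_ker, Submodule.mem_comap]
    constructor
    · intro hx0
      have hxrange : (x : X) ∈ LinearMap.range (T : X →ₗ[ℝ] X) := by
        have : (LinearMap.range (T : X →ₗ[ℝ] X)).mkQ (x : X) = 0 := hx0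
        rwa [Submodule.mkQ_apply, Submodule.Quotient.mk_eq_zero] at this
      rw [hrangeT] at hxrange
      obtain ⟨m, hm, r, hr, hmr⟩ := Submodule.mem_sup.1 hxrange
      have hmN : m ∈ N := hM'N hm
      have hrN : r ∈ N := by
        have : r = (x : X) - m := by rw [← hmr]; abel
        rw [this]
        exact N.sub_mem x.2 hmN
      have : r ∈ N ⊓ R := ⟨hrN, hr⟩
      rw [hinf, Submodule.mem_bot] at this
      rw [this, add_zero] at hmr
      have hfin : (x : X) ∈ M' := hmr ▸ hm
      exact hfin
    · intro hxM'
      have hxrange : (x : X) ∈ LinearMap.range (T : X →ₗ[ℝ] X) := by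
        rw [hrangeT]
        exact Submodule.mem_sup_left hxM'
      show (LinearMap.range (T : X →ₗ[ℝ] X)).mkQ (x : X) = 0
      rwa [Submodule.mkQ_apply, Submodule.Quotient.mk_eq_zero]
  have hfr_kerg : Module.finrank ℝ (LinearMap.ker g) = Module.finrank ℝ M' := by
    rw [hkerg]
    exact (Submodule.comapSubtypeEquivOfLe hM'N).finrank_eq
  -- the restriction of T to N
  have hTN' : ∀ x ∈ N, (T : X →ₗ[ℝ] X) x ∈ N := hTN
  set Tn : N →ₗ[ℝ] N := (T : X →ₗ[ℝ] X).restrict hTN' with hTn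
  have hrn := LinearMap.finrank_range_add_finrank_ker Tn
  have hrange_Tn : Submodule.map N.subtype (LinearMap.range Tn) = M' := by
    ext x
    constructor
    · rintro ⟨⟨y, hyN⟩, ⟨⟨z, hzN⟩, hz⟩, rfl⟩
      refine ⟨z, hzN, ?_⟩
      have := congrArg (Subtype.val) hz
      exact this
    · rintro ⟨n, hn, rfl⟩
      exact ⟨⟨T n, hTN n hn⟩, ⟨⟨n, hn⟩, rfl⟩, rfl⟩
  have hfr_rangeTn : Module.finrank ℝ (LinearMap.range Tn) = Module.finrank ℝ M' := by
    rw [← hrange_Tn]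
    exact (Submodule.finrank_map_subtype_eq N _).symm
  have hkerTn : LinearMap.ker Tn = Submodule.comap N.subtype (LinearMap.ker (T : X →ₗ[ℝ] X)) := by
    ext ⟨x, hx⟩
    simp only [LinearMap.mem_ker, Submodule.mem_comap]
    constructor
    · intro h0
      have := congrArg (Subtype.val) h0
      exact this
    · intro h0
      exact Subtype.ext h0
  have hfr_kerTn : Module.finrank ℝ (LinearMap.ker Tn) = Module.finrank ℝ (LinearMap.ker (T : X →ₗ[ℝ] X)) := by
    rw [hkerTn]
    exact (Submodule.comapSubtypeEquivOfLe hkerTN).finrank_eq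
  have hq := Submodule.finrank_quotient_add_finrank (LinearMap.ker g)
  have hfr_e : Module.finrank ℝ (N ⧸ LinearMap.ker g) = Module.finrank ℝ (X ⧸ LinearMap.range (T : X →ₗ[ℝ] X)) :=
    e.finrank_eq
  refine ⟨hkerTfd, hclosedT, hcokerfd, ?_⟩
  rw [hfr_rangeTn, hfr_kerTn] at hrn
  rw [hfr_kerg, hfr_e] at hq
  linarith
end

section
/- The functions u₁(x,t) = sin(πx/2)·sin(l(t − πx/2)) and u₂(x,t) = cos(πx/2)·sin(l(t − πx/2)), for any natural number l, satisfy the system ∂ₜu₁ + (2/π)∂ₓu₁ − u₂ = 0, ∂ₜu₂ + (2/π)∂ₓu₂ + u₁ = 0 on (0,1)×ℝ together with the boundary conditions u₁(0,t) = 0 and u₂(1,t) = 0 for all t ∈ ℝ. -/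
open Real

lemma hd_arg (l : ℕ) (b t : ℝ) :
    HasDerivAt (fun s : ℝ => Real.sin (l * (s - b))) (l * Real.cos (l * (t - b))) t := by
  have h1 : HasDerivAt (fun s : ℝ => (l : ℝ) * (s - b)) l t := by
    simpa using ((hasDerivAt_id t).sub_const b).const_mul (l : ℝ)
  simpa [mul_comm, Function.comp_def] using (Real.hasDerivAt_sin ((l : ℝ) * (t - b))).comp t h1

lemma hd_argx (l : ℕ) (t x : ℝ) :
    HasDerivAt (fun y : ℝ => Real.sin (l * (t - π * y / 2)))
      (Real.cos (l * (t - π * x / 2)) * (-(π / 2) * l)) x := by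
  have h1 : HasDerivAt (fun y : ℝ => (l : ℝ) * (t - π * y / 2)) ((l : ℝ) * (-(π / 2))) x := by
    have : HasDerivAt (fun y : ℝ => t - π * y / 2) (-(π / 2)) x := by
      simpa [neg_div, mul_comm, mul_div_assoc] using
        ((hasDerivAt_id x).const_mul (π / 2)).const_sub t
    exact this.const_mul (l : ℝ)
  have := (Real.hasDerivAt_sin ((l : ℝ) * (t - π * x / 2))).comp x h1
  exact this.congr_deriv (by ring)

lemma hd_sinpx (x : ℝ) :
    HasDerivAt (fun y : ℝ => Real.sin (π * y / 2)) ((π / 2) * Real.cos (π * x / 2)) x := by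
  have h1 : HasDerivAt (fun y : ℝ => π * y / 2) (π / 2) x := by
    simpa [mul_comm, mul_div_assoc] using ((hasDerivAt_id x).const_mul (π / 2))
  simpa [mul_comm, Function.comp_def] using (Real.hasDerivAt_sin (π * x / 2)).comp x h1

lemma hd_cospx (x : ℝ) :
    HasDerivAt (fun y : ℝ => Real.cos (π * y / 2)) (-(π / 2) * Real.sin (π * x / 2)) x := by
  have h1 : HasDerivAt (fun y : ℝ => π * y / 2) (π / 2) x := by
    simpa [mul_comm, mul_div_assoc] using ((hasDerivAt_id x).const_mul (π / 2))
  simpa [mul_comm, neg_mul, mul_neg, Function.comp_def] using (Real.hasDerivAt_cos (π * x / 2)).comp x h1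

theorem example_solutions_satisfy_system (l : ℕ)
    (u₁ u₂ : ℝ → ℝ → ℝ)
    (hu₁ : ∀ x t, u₁ x t = Real.sin (π * x / 2) * Real.sin (l * (t - π * x / 2)))
    (hu₂ : ∀ x t, u₂ x t = Real.cos (π * x / 2) * Real.sin (l * (t - π * x / 2))) :
    (∀ x ∈ Set.Ioo (0 : ℝ) 1, ∀ t : ℝ,
        deriv (fun s => u₁ x s) t + (2 / π) * deriv (fun y => u₁ y t) x - u₂ x t = 0 ∧
        deriv (fun s => u₂ x s) t + (2 / π) * deriv (fun y => u₂ y t) x + u₁ x t = 0) ∧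
    (∀ t : ℝ, u₁ 0 t = 0) ∧ (∀ t : ℝ, u₂ 1 t = 0) := by
  have hpi : (π : ℝ) ≠ 0 := Real.pi_ne_zero
  refine ⟨?_, ?_, ?_⟩
  · intro x _ t
    have e1t : (fun s => u₁ x s) = fun s => Real.sin (π * x / 2) * Real.sin (l * (s - π * x / 2)) :=
      funext fun s => hu₁ x s
    have e2t : (fun s => u₂ x s) = fun s => Real.cos (π * x / 2) * Real.sin (l * (s - π * x / 2)) :=
      funext fun s => hu₂ x s
    have e1x : (fun y => u₁ y t) = fun y => Real.sin (π * y / 2) * Real.sin (l * (t - π * y / 2)) :=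
      funext fun y => hu₁ y t
    have e2x : (fun y => u₂ y t) = fun y => Real.cos (π * y / 2) * Real.sin (l * (t - π * y / 2)) :=
      funext fun y => hu₂ y t
    have d1t := (((hd_arg l (π * x / 2) t)).const_mul (Real.sin (π * x / 2))).deriv
    have d2t := (((hd_arg l (π * x / 2) t)).const_mul (Real.cos (π * x / 2))).deriv
    have d1x := ((hd_sinpx x).mul (hd_argx l t x)).deriv
    have d2x := ((hd_cospx x).mul (hd_argx l t x)).deriv
    simp only [Pi.mul_def] at d1x d2x
    rw [e1t, e2t, e1x, e2x, d1t, d2t, d1x, d2x, hu₁, hu₂]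
    constructor <;> · field_simp; ring_nf
  · intro t; simp [hu₁]
  · intro t; simp [hu₂, Real.cos_pi_div_two]
end

section
/- For distinct natural numbers l, the family of solutions (u₁^l, u₂^l) with u₁^l(x,t) = sin(πx/2)·sin(l(t − πx/2)) and u₂^l(x,t) = cos(πx/2)·sin(l(t − πx/2)) is linearly independent in the space of bounded continuous functions from [0,1]×ℝ to ℝ²; in particular the solution space of the homogeneous problem ∂ₜu₁+(2/π)∂ₓu₁−u₂=0, ∂ₜu₂+(2/π)∂ₓu₂+u₁=0, u₁(0,t)=0, u₂(1,t)=0 is infinite-dimensional. -/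
open Real

lemma cos_int_integral (n : ℤ) (hn : n ≠ 0) :
    ∫ x in (0:ℝ)..(2*π), Real.cos ((n:ℝ) * x) = 0 := by
  have hc : (n:ℝ) ≠ 0 := Int.cast_ne_zero.mpr hn
  rw [intervalIntegral.integral_comp_mul_left Real.cos hc]
  have : Real.sin ((n:ℝ) * (2*π)) = 0 := by
    have h : (n:ℝ) * (2*π) = (2*n : ℤ) * π := by push_cast; ring
    rw [h, Real.sin_int_mul_pi]
  simp [integral_cos, this]

lemma sin_orth (l m : ℕ+) :
    ∫ x in (0:ℝ)..(2*π), Real.sin ((l:ℝ) * x) * Real.sin ((m:ℝ) * x)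
      = if l = m then π else 0 := by
  have key : ∀ x : ℝ, Real.sin ((l:ℝ)*x) * Real.sin ((m:ℝ)*x)
      = (Real.cos ((((l:ℤ) - m : ℤ):ℝ) * x) - Real.cos ((((l:ℤ) + m : ℤ):ℝ) * x)) / 2 := by
    intro x
    have h1 : (((l:ℤ) - m : ℤ):ℝ) * x = (l:ℝ)*x - (m:ℝ)*x := by push_cast; ring
    have h2 : (((l:ℤ) + m : ℤ):ℝ) * x = (l:ℝ)*x + (m:ℝ)*x := by push_cast; ring
    rw [h1, h2, Real.cos_sub, Real.cos_add]; ring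
  rw [intervalIntegral.integral_congr (fun x _ => key x),
    intervalIntegral.integral_div,
    intervalIntegral.integral_sub]
  · rcases eq_or_ne l m with h | h
    · subst h
      simp only [sub_self, Int.cast_zero, zero_mul, Real.cos_zero]
      rw [cos_int_integral ((l:ℤ) + l) (by positivity)]
      simp [if_pos rfl]
    · have hne : ((l:ℤ) - m) ≠ 0 := by
        simp only [sub_ne_zero]
        exact_mod_cast fun hh => h (by exact_mod_cast PNat.coe_injective (by exact_mod_cast hh))
      rw [cos_int_integral _ hne, cos_int_integral ((l:ℤ) + m) (by positivity)]
      simp [h]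
  · exact (Real.continuous_cos.comp (continuous_const.mul continuous_id)).intervalIntegrable _ _
  · exact (Real.continuous_cos.comp (continuous_const.mul continuous_id)).intervalIntegrable _ _

lemma sin_li : LinearIndependent ℝ (fun (l : ℕ+) => (fun x : ℝ => Real.sin ((l:ℝ) * x))) := by
  rw [linearIndependent_iff']
  intro s c hsum m hm
  have h0 : ∀ x : ℝ, (∑ l ∈ s, c l * Real.sin ((l:ℝ) * x)) = 0 := by
    intro x
    have := congrFun hsum x
    simpa using this
  have hint : ∫ x in (0:ℝ)..(2*π),
      (∑ l ∈ s, c l * Real.sin ((l:ℝ) * x)) * Real.sin ((m:ℝ) * x) = 0 := by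
    simp [h0]
  have hit : ∀ l : ℕ+, IntervalIntegrable
      (fun x => c l * Real.sin ((l:ℝ)*x) * Real.sin ((m:ℝ)*x)) MeasureTheory.volume 0 (2*π) := by
    intro l
    apply Continuous.intervalIntegrable
    continuity
  rw [intervalIntegral.integral_congr (g := fun x => ∑ l ∈ s, c l * Real.sin ((l:ℝ)*x) * Real.sin ((m:ℝ)*x))
      (by intro x _; simp only [Finset.sum_mul]),
    intervalIntegral.integral_finset_sum (fun l _ => hit l)] at hint
  have : ∀ l ∈ s, (∫ x in (0:ℝ)..(2*π), c l * Real.sin ((l:ℝ)*x) * Real.sin ((m:ℝ)*x))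
      = c l * (if l = m then π else 0) := by
    intro l _
    rw [← sin_orth l m, ← intervalIntegral.integral_const_mul]
    congr 1; funext x; ring
  simp only [Finset.sum_congr rfl this, mul_ite, mul_zero] at hint
  rw [Finset.sum_ite_eq' s m (fun l => c l * π), if_pos hm] at hint
  have hπ : (π : ℝ) ≠ 0 := Real.pi_ne_zero
  exact (mul_eq_zero.mp hint).resolve_right hπ

theorem example_solutions_linearIndependent
    (U : ℕ+ → BoundedContinuousFunction (Set.Icc (0 : ℝ) 1 × ℝ) (ℝ × ℝ))
    (hU : ∀ l : ℕ+, ∀ p : Set.Icc (0 : ℝ) 1 × ℝ,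
        U l p = (Real.sin (π * (p.1 : ℝ) / 2) * Real.sin (l * (p.2 - π * (p.1 : ℝ) / 2)),
                 Real.cos (π * (p.1 : ℝ) / 2) * Real.sin (l * (p.2 - π * (p.1 : ℝ) / 2)))) :
    LinearIndependent ℝ U ∧
      ¬ Module.Finite ℝ (Submodule.span ℝ (Set.range U)) := by
  have he : (0:ℝ) ∈ Set.Icc (0:ℝ) 1 := Set.mem_Icc.mpr ⟨le_refl 0, zero_le_one⟩
  let T : BoundedContinuousFunction (Set.Icc (0 : ℝ) 1 × ℝ) (ℝ × ℝ) →ₗ[ℝ] (ℝ → ℝ) :=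
    { toFun := fun f t => (f (⟨0, he⟩, t)).2
      map_add' := by intro f g; funext t; simp
      map_smul' := by intro c f; funext t; simp }
  have hTU : (T ∘ U) = fun (l : ℕ+) => (fun x : ℝ => Real.sin ((l:ℝ) * x)) := by
    funext l t
    simp only [T, Function.comp_apply, LinearMap.coe_mk, AddHom.coe_mk]
    rw [hU l (⟨0, he⟩, t)]
    norm_num
  have li : LinearIndependent ℝ U := by
    apply LinearIndependent.of_comp T
    rw [hTU]
    exact sin_li
  refine ⟨li, ?_⟩
  intro hfin
  exact Module.Finite.not_linearIndependent_of_infinite _ (linearIndependent_span li)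
end

section
/- Under the assumptions that a ∈ BC¹ and inf a > 0, the characteristic ω(ξ, x, t) defined by ∂_ξω = 1/a(ξ,ω), ω(x,x,t) = t, satisfies ∂ₜω(ξ, x, t) = exp( ∫_ξ^x (∂₂a / a²)(η, ω(η, x, t)) dη ) for all ξ, x ∈ [0,1] and t ∈ ℝ. -/
open Set

theorem characteristic_deriv_t
    (a : ℝ × ℝ → ℝ) (a₀ M : ℝ)
    (ha : ContDiff ℝ 1 a)
    (hbd : ∀ p, |a p| ≤ M ∧ ‖fderiv ℝ a p‖ ≤ M)
    (ha₀ : 0 < a₀) (hlow : ∀ p, a₀ ≤ a p)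
    (ω : ℝ → ℝ → ℝ → ℝ)
    (hinit : ∀ x ∈ Icc (0 : ℝ) 1, ∀ t : ℝ, ω x x t = t)
    (hode : ∀ ξ ∈ Icc (0 : ℝ) 1, ∀ x ∈ Icc (0 : ℝ) 1, ∀ t : ℝ,
        HasDerivAt (fun ξ' => ω ξ' x t) (1 / a (ξ, ω ξ x t)) ξ) :
    ∀ ξ ∈ Icc (0 : ℝ) 1, ∀ x ∈ Icc (0 : ℝ) 1, ∀ t : ℝ,
      HasDerivAt (fun s => ω ξ x s)
        (Real.exp (∫ η in ξ..x,
          deriv (fun s => a (η, s)) (ω η x t) / (a (η, ω η x t)) ^ 2)) t := by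
  -- basic positivity facts
  have hapos : ∀ p, 0 < a p := fun p => lt_of_lt_of_le ha₀ (hlow p)
  have hane : ∀ p, a p ≠ 0 := fun p => (hapos p).ne'
  have hM : 0 < M := lt_of_lt_of_le ha₀ ((hlow (0, 0)).trans ((le_abs_self _).trans (hbd (0, 0)).1))
  set L : ℝ := M / a₀ ^ 2 with hLdef
  have hL0 : 0 < L := div_pos hM (pow_pos ha₀ 2)
  -- derivative of the slice `z ↦ a (η, z)`
  have hslice : ∀ η y : ℝ, HasDerivAt (fun z => a (η, z)) (fderiv ℝ a (η, y) (0, 1)) y := by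
    intro η y
    have h1 : HasFDerivAt a (fderiv ℝ a (η, y)) (η, y) :=
      (ha.differentiable one_ne_zero (η, y)).hasFDerivAt
    have h2 : HasDerivAt (fun z : ℝ => ((η : ℝ), z)) (((0 : ℝ), (1 : ℝ))) y :=
      (hasDerivAt_const y η).prodMk (hasDerivAt_id y)
    exact h1.comp_hasDerivAt y h2
  have hd2bd : ∀ η y : ℝ, |fderiv ℝ a (η, y) (0, 1)| ≤ M := by
    intro η y
    calc |fderiv ℝ a (η, y) (0, 1)| ≤ ‖fderiv ℝ a (η, y)‖ * ‖((0 : ℝ), (1 : ℝ))‖ :=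
          (fderiv ℝ a (η, y)).le_opNorm _
      _ ≤ M * 1 := by
          have : ‖((0 : ℝ), (1 : ℝ))‖ = 1 := by simp [Prod.norm_def]
          rw [this]; simpa using (hbd (η, y)).2
      _ = M := mul_one M
  -- derivative of `z ↦ (a (η, z))⁻¹`
  have hinv : ∀ η y : ℝ,
      HasDerivAt (fun z => (a (η, z))⁻¹) (-(fderiv ℝ a (η, y) (0, 1)) / (a (η, y)) ^ 2) y :=
    fun η y => (hslice η y).inv (hane _)
  have hinvbd : ∀ η y : ℝ, |(-(fderiv ℝ a (η, y) (0, 1)) / (a (η, y)) ^ 2)| ≤ L := by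
    intro η y
    rw [abs_div, abs_neg]
    have h1 : |(a (η, y)) ^ 2| = (a (η, y)) ^ 2 := abs_of_pos (pow_pos (hapos _) 2)
    rw [h1]
    apply div_le_div₀ (le_of_lt hM) (hd2bd η y) (pow_pos ha₀ 2)
    have := hlow (η, y)
    nlinarith [hapos (η, y)]
  -- Lipschitz bound for `z ↦ (a (η,z))⁻¹`
  have hlip : ∀ η y₁ y₂ : ℝ, |(a (η, y₁))⁻¹ - (a (η, y₂))⁻¹| ≤ L * |y₁ - y₂| := by
    intro η y₁ y₂
    have := Convex.norm_image_sub_le_of_norm_hasDerivWithin_le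
      (f := fun z => (a (η, z))⁻¹) (f' := fun z => -(fderiv ℝ a (η, z) (0, 1)) / (a (η, z)) ^ 2)
      (s := univ) (C := L)
      (fun z _ => (hinv η z).hasDerivWithinAt) (fun z _ => hinvbd η z) convex_univ
      (mem_univ y₂) (mem_univ y₁)
    simpa using this
  intro ξ hξ x hx t
  set I : Set ℝ := uIcc ξ x with hIdef
  have hIsub : I ⊆ Icc (0 : ℝ) 1 := uIcc_subset_Icc hξ hx
  have hxI : x ∈ I := right_mem_uIcc
  have hξI : ξ ∈ I := left_mem_uIcc
  have hcont : ∀ s : ℝ, ContinuousOn (fun r => ω r x s) (Icc (0 : ℝ) 1) := fun s r hr =>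
    ((hode r hr x hx s).continuousAt).continuousWithinAt
  -- trajectories with different initial data never meet
  have hne : ∀ s : ℝ, s ≠ t → ∀ r ∈ Icc (0 : ℝ) 1, ω r x s ≠ ω r x t := by
    intro s hs r hr h
    apply hs
    have hv : ∀ u : ℝ, LipschitzOnWith L.toNNReal (fun y => (a (u, y))⁻¹) univ := by
      intro u
      apply LipschitzWith.lipschitzOnWith
      apply LipschitzWith.of_dist_le_mul
      intro y₁ y₂
      rw [Real.dist_eq, Real.dist_eq, Real.coe_toNNReal L hL0.le]
      exact hlip u y₁ y₂
    have hfinal : ω x x s = ω x x t := by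
      rcases le_total r x with hrx | hrx
      · have := ODE_solution_unique_of_mem_Icc_right (v := fun u y => (a (u, y))⁻¹)
          (s := fun _ => univ) (fun u _ => hv u)
          ((hcont s).mono (Icc_subset_Icc hr.1 hx.2))
          (fun u hu => by
            simpa [one_div] using
              (hode u ⟨hr.1.trans hu.1, hu.2.le.trans hx.2⟩ x hx s).hasDerivWithinAt)
          (fun _ _ => trivial)
          ((hcont t).mono (Icc_subset_Icc hr.1 hx.2))
          (fun u hu => by
            simpa [one_div] using
              (hode u ⟨hr.1.trans hu.1, hu.2.le.trans hx.2⟩ x hx t).hasDerivWithinAt)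
          (fun _ _ => trivial) h
        exact this (right_mem_Icc.mpr hrx)
      · have := ODE_solution_unique_of_mem_Icc_left (v := fun u y => (a (u, y))⁻¹)
          (s := fun _ => univ) (fun u _ => hv u)
          ((hcont s).mono (Icc_subset_Icc hx.1 hr.2))
          (fun u hu => by
            simpa [one_div] using
              (hode u ⟨hx.1.trans hu.1.le, hu.2.trans hr.2⟩ x hx s).hasDerivWithinAt)
          (fun _ _ => trivial)
          ((hcont t).mono (Icc_subset_Icc hx.1 hr.2))
          (fun u hu => by
            simpa [one_div] using
              (hode u ⟨hx.1.trans hu.1.le, hu.2.trans hr.2⟩ x hx t).hasDerivWithinAt)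
          (fun _ _ => trivial) h
        exact this (left_mem_Icc.mpr hrx)
    rw [hinit x hx s, hinit x hx t] at hfinal
    exact hfinal
  -- the logarithmic derivative quotient
  set c : ℝ → ℝ → ℝ := fun s η =>
    ((a (η, ω η x s))⁻¹ - (a (η, ω η x t))⁻¹) / (ω η x s - ω η x t) with hcdef
  have hcbd : ∀ s η : ℝ, |c s η| ≤ L := by
    intro s η
    by_cases hΔ : ω η x s - ω η x t = 0
    · simp [hcdef, hΔ, hL0.le]
    · rw [hcdef]
      simp only
      rw [abs_div, div_le_iff₀ (abs_pos.mpr hΔ)]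
      exact hlip η _ _
  have hccont : ∀ s : ℝ, s ≠ t → ContinuousOn (c s) (Icc (0 : ℝ) 1) := by
    intro s hs
    apply ContinuousOn.div
    · apply ContinuousOn.sub
      · exact (ha.continuous.comp_continuousOn
          (continuousOn_id.prodMk (hcont s))).inv₀ (fun r _ => hane _)
      · exact (ha.continuous.comp_continuousOn
          (continuousOn_id.prodMk (hcont t))).inv₀ (fun r _ => hane _)
    · exact (hcont s).sub (hcont t)
    · intro r hr
      exact sub_ne_zero.mpr (hne s hs r hr)
  -- the key identity
  have key : ∀ s : ℝ, s ≠ t → ∀ r ∈ I,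
      ω r x s - ω r x t = (s - t) * Real.exp (∫ u in x..r, c s u) := by
    intro s hs
    set Φ : ℝ → ℝ := fun r => ∫ u in x..r, c s u with hΦdef
    have hcC : ContinuousOn (c s) I := (hccont s hs).mono hIsub
    have hint : ∀ r ∈ I, IntervalIntegrable (c s) MeasureTheory.volume x r := fun r hr =>
      (hcC.mono (uIcc_subset_uIcc hxI hr)).intervalIntegrable
    have hΦd : ∀ r ∈ I, HasDerivWithinAt Φ (c s r) I r := by
      intro r hr
      haveI : Fact (r ∈ uIcc ξ x) := ⟨hr⟩
      exact intervalIntegral.integral_hasDerivWithinAt_right (hint r hr)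
        ⟨I, self_mem_nhdsWithin, hcC.aestronglyMeasurable measurableSet_uIcc⟩
        (hcC r hr)
    have hΔd : ∀ r ∈ I, HasDerivWithinAt (fun r => ω r x s - ω r x t)
        (c s r * (ω r x s - ω r x t)) I r := by
      intro r hr
      have h := ((hode r (hIsub hr) x hx s).sub (hode r (hIsub hr) x hx t)).hasDerivWithinAt
        (s := I)
      have hΔne : ω r x s - ω r x t ≠ 0 := sub_ne_zero.mpr (hne s hs r (hIsub hr))
      convert h using 1
      · rfl
      · rfl
      · rfl
      rw [hcdef]
      simp only
      rw [div_mul_cancel₀ _ hΔne, one_div, one_div]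
    set E : ℝ → ℝ := fun r => (ω r x s - ω r x t) * Real.exp (-Φ r) with hEdef
    have hEd : ∀ r ∈ I, HasDerivWithinAt E 0 I r := by
      intro r hr
      have := (hΔd r hr).mul (((hΦd r hr).neg).exp)
      convert this using 1
      · rfl
      · rfl
      · rfl
      ring
    have hconst : ∀ r ∈ I, E r = E x := by
      intro r hr
      have h0 := Convex.norm_image_sub_le_of_norm_hasDerivWithin_le (f := E) (f' := fun _ => (0 : ℝ))
        (C := 0) hEd (fun r _ => by simp) (convex_uIcc ξ x) hxI hr
      have : ‖E r - E x‖ ≤ 0 := by simpa using h0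
      have := norm_le_zero_iff.mp this
      linarith [sub_eq_zero.mp this]
    intro r hr
    have h3 := hconst r hr
    have hEx : E x = s - t := by
      rw [hEdef]
      simp [hΦdef, intervalIntegral.integral_same, hinit x hx s, hinit x hx t]
    rw [hEx] at h3
    rw [← h3, hEdef]
    simp only
    rw [mul_assoc, ← Real.exp_add, neg_add_cancel, Real.exp_zero, mul_one]
  -- a uniform bound from the key identity
  have hbdd : ∀ s : ℝ, s ≠ t → ∀ r ∈ I, |ω r x s - ω r x t| ≤ |s - t| * Real.exp L := by
    intro s hs r hr
    rw [key s hs r hr, abs_mul, Real.abs_exp]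
    apply mul_le_mul_of_nonneg_left _ (abs_nonneg _)
    apply Real.exp_le_exp.mpr
    calc (∫ u in x..r, c s u) ≤ |∫ u in x..r, c s u| := le_abs_self _
      _ ≤ L * |r - x| := by
          have h := intervalIntegral.norm_integral_le_of_norm_le_const
            (f := c s) (a := x) (b := r) (C := L)
            (fun u _ => by rw [Real.norm_eq_abs]; exact hcbd s u)
          simpa [Real.norm_eq_abs] using h
      _ ≤ L * 1 := by
          apply mul_le_mul_of_nonneg_left _ hL0.le
          have h1 := hIsub hr
          rw [abs_sub_le_iff]
          constructor <;> [linarith [h1.1, h1.2, hx.1, hx.2]; linarith [h1.1, h1.2, hx.1, hx.2]]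
      _ = L := mul_one L
  -- the limit integrand
  set c₀ : ℝ → ℝ := fun η => -(fderiv ℝ a (η, ω η x t) (0, 1)) / (a (η, ω η x t)) ^ 2 with hc₀def
  have hrw : (∫ η in ξ..x, deriv (fun z => a (η, z)) (ω η x t) / (a (η, ω η x t)) ^ 2)
      = ∫ η in x..ξ, c₀ η := by
    rw [intervalIntegral.integral_symm]
    rw [← intervalIntegral.integral_neg]
    apply intervalIntegral.integral_congr
    intro η _
    rw [hc₀def]
    simp only
    rw [(hslice η (ω η x t)).deriv, neg_div]
  rw [hrw]
  rw [hasDerivAt_iff_tendsto_slope]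
  have hIoc : uIoc x ξ ⊆ I := by
    rw [hIdef, uIcc_comm]
    exact uIoc_subset_uIcc
  -- convergence of the integrals
  have hint : Filter.Tendsto (fun s => ∫ u in x..ξ, c s u) (nhdsWithin t {t}ᶜ)
      (nhds (∫ u in x..ξ, c₀ u)) := by
    apply intervalIntegral.tendsto_integral_filter_of_dominated_convergence (bound := fun _ => L)
    · filter_upwards [self_mem_nhdsWithin] with s hs
      exact ((hccont s hs).mono (fun u hu => hIsub (hIoc hu))).aestronglyMeasurable
        measurableSet_uIoc
    · filter_upwards with s
      exact MeasureTheory.ae_of_all _ fun u _ => by simpa using hcbd s u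
    · exact intervalIntegrable_const
    · apply MeasureTheory.ae_of_all
      intro u hu
      have huI : u ∈ I := hIoc hu
      have hu01 : u ∈ Icc (0 : ℝ) 1 := hIsub huI
      have hd : HasDerivAt (fun z => (a (u, z))⁻¹) (c₀ u) (ω u x t) := hinv u (ω u x t)
      have hslope := hasDerivAt_iff_tendsto_slope.mp hd
      have hy : Filter.Tendsto (fun s => ω u x s) (nhdsWithin t {t}ᶜ)
          (nhdsWithin (ω u x t) {ω u x t}ᶜ) := by
        rw [tendsto_nhdsWithin_iff]
        have hg : Filter.Tendsto (fun s : ℝ => |s - t| * Real.exp L) (nhdsWithin t {t}ᶜ)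
            (nhds 0) := by
          have hg1 : Filter.Tendsto (fun s : ℝ => |s - t| * Real.exp L) (nhds t)
              (nhds (|t - t| * Real.exp L)) :=
            (((continuous_id.sub continuous_const).abs).mul continuous_const).tendsto t
          simpa using hg1.mono_left nhdsWithin_le_nhds
        constructor
        · rw [tendsto_iff_dist_tendsto_zero]
          apply squeeze_zero' (Filter.Eventually.of_forall fun s => dist_nonneg) _ hg
          filter_upwards [self_mem_nhdsWithin] with s hs
          rw [Real.dist_eq]
          exact hbdd s hs u huI
        · filter_upwards [self_mem_nhdsWithin] with s hs
          exact hne s hs u hu01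
      have := hslope.comp hy
      apply this.congr
      intro s
      rw [Function.comp_apply, slope_def_field, hcdef]
  have hfin : Filter.Tendsto (fun s => Real.exp (∫ u in x..ξ, c s u)) (nhdsWithin t {t}ᶜ)
      (nhds (Real.exp (∫ u in x..ξ, c₀ u))) :=
    (Real.continuous_exp.tendsto _).comp hint
  apply hfin.congr'
  filter_upwards [self_mem_nhdsWithin] with s hs
  rw [slope_def_field, key s hs ξ hξI, mul_div_cancel_left₀ _ (sub_ne_zero.mpr hs)]
end

section
/- Suppose u : [0,1]×ℝ → ℝ is C¹ and satisfies ∂ₜu + a(x,t)∂ₓu + b(x,t)u = f(x,t) on [0,1]×ℝ, where a ∈ BC¹ with inf a > 0. Then for all x ∈ [0,1] and t ∈ ℝ, u(x,t) = c(0,x,t)·u(0, ω(0,x,t)) + ∫₀ˣ d(ξ,x,t) f(ξ, ω(ξ,x,t)) dξ, where ω is the characteristic of a, c(ξ,x,t) = exp(∫_x^ξ (b/a)(η, ω(η,x,t)) dη), and d(ξ,x,t) = c(ξ,x,t)/a(ξ, ω(ξ,x,t)) (integration along characteristics for a single scalar equation). -/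
open Set

theorem integration_along_characteristics
    (a b f : ℝ × ℝ → ℝ) (a₀ : ℝ)
    (ha : ContDiff ℝ 1 a)
    (habd : ∃ M : ℝ, ∀ p, |a p| ≤ M ∧ |b p| ≤ M ∧ |f p| ≤ M ∧ ‖fderiv ℝ a p‖ ≤ M)
    (hb : Continuous b) (hf : Continuous f)
    (ha₀ : 0 < a₀) (hlow : ∀ p, a₀ ≤ a p)
    (ω : ℝ → ℝ → ℝ → ℝ)
    (hinit : ∀ x ∈ Icc (0 : ℝ) 1, ∀ t : ℝ, ω x x t = t)
    (hode : ∀ ξ ∈ Icc (0 : ℝ) 1, ∀ x ∈ Icc (0 : ℝ) 1, ∀ t : ℝ,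
        HasDerivAt (fun ξ' => ω ξ' x t) (1 / a (ξ, ω ξ x t)) ξ)
    (u : ℝ × ℝ → ℝ) (hu : ContDiff ℝ 1 u)
    (hpde : ∀ x ∈ Icc (0 : ℝ) 1, ∀ t : ℝ,
        deriv (fun s => u (x, s)) t + a (x, t) * deriv (fun y => u (y, t)) x +
          b (x, t) * u (x, t) = f (x, t)) :
    ∀ x ∈ Icc (0 : ℝ) 1, ∀ t : ℝ,
      u (x, t) =
        Real.exp (∫ η in x..(0 : ℝ), b (η, ω η x t) / a (η, ω η x t)) *
          u (0, ω 0 x t) +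
        ∫ ξ in (0 : ℝ)..x,
          (Real.exp (∫ η in x..ξ, b (η, ω η x t) / a (η, ω η x t)) /
            a (ξ, ω ξ x t)) * f (ξ, ω ξ x t) := by
  intro x hx t
  have hane : ∀ p : ℝ × ℝ, a p ≠ 0 := fun p => ne_of_gt (lt_of_lt_of_le ha₀ (hlow p))
  have hud : Differentiable ℝ u := hu.differentiable one_ne_zero
  -- continuity of the characteristic on [0,1]
  have hW : ∀ ξ ∈ Icc (0:ℝ) 1, HasDerivAt (fun ξ' => ω ξ' x t) (1 / a (ξ, ω ξ x t)) ξ :=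
    fun ξ hξ => hode ξ hξ x hx t
  have hWc : ContinuousOn (fun ξ => ω ξ x t) (Icc 0 1) :=
    fun ξ hξ => (hW ξ hξ).continuousAt.continuousWithinAt
  -- projection onto [0,1]
  set π : ℝ → ℝ := fun ξ => max 0 (min 1 ξ) with hπdef
  have hπc : Continuous π := continuous_const.max (continuous_const.min continuous_id)
  have hπmem : ∀ ξ, π ξ ∈ Icc (0:ℝ) 1 :=
    fun ξ => ⟨le_max_left _ _, max_le zero_le_one (min_le_left _ _)⟩
  have hπid : ∀ ξ ∈ Icc (0:ℝ) 1, π ξ = ξ := by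
    intro ξ hξ
    simp only [hπdef]
    rw [min_eq_right hξ.2, max_eq_right hξ.1]
  have hWπ : Continuous (fun ξ => ω (π ξ) x t) :=
    hWc.comp_continuous hπc hπmem
  -- continuous extension of b/a along the characteristic
  set q : ℝ → ℝ := fun ξ => b (π ξ, ω (π ξ) x t) / a (π ξ, ω (π ξ) x t) with hqdef
  have hqc : Continuous q :=
    (hb.comp (hπc.prodMk hWπ)).div (ha.continuous.comp (hπc.prodMk hWπ)) (fun ξ => hane _)
  have hqeq : ∀ η ∈ Icc (0:ℝ) 1, b (η, ω η x t) / a (η, ω η x t) = q η := by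
    intro η hη
    simp only [hqdef, hπid η hη]
  set F : ℝ → ℝ := fun ξ => ∫ η in x..ξ, q η with hFdef
  have hFd : ∀ ξ, HasDerivAt F (q ξ) ξ := fun ξ =>
    intervalIntegral.integral_hasDerivAt_right (hqc.intervalIntegrable x ξ)
      hqc.aestronglyMeasurable.stronglyMeasurableAtFilter hqc.continuousAt
  have hFc : Continuous F := continuous_iff_continuousAt.mpr fun ξ => (hFd ξ).continuousAt
  have hint : ∀ ξ ∈ Icc (0:ℝ) 1,
      (∫ η in x..ξ, b (η, ω η x t) / a (η, ω η x t)) = F ξ := by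
    intro ξ hξ
    exact intervalIntegral.integral_congr (fun η hη => hqeq η (uIcc_subset_Icc hx hξ hη))
  -- partial derivatives of u
  have hux : ∀ y s : ℝ, HasDerivAt (fun y' => u (y', s)) (fderiv ℝ u (y, s) (1, 0)) y := by
    intro y s
    exact (hud (y, s)).hasFDerivAt.comp_hasDerivAt y
      ((hasDerivAt_id y).prodMk (hasDerivAt_const y s))
  have hut : ∀ y s : ℝ, HasDerivAt (fun s' => u (y, s')) (fderiv ℝ u (y, s) (0, 1)) s := by
    intro y s
    exact (hud (y, s)).hasFDerivAt.comp_hasDerivAt s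
      ((hasDerivAt_const s y).prodMk (hasDerivAt_id s))
  have hpde' : ∀ ξ ∈ Icc (0:ℝ) 1, ∀ s : ℝ,
      fderiv ℝ u (ξ, s) (0, 1) + a (ξ, s) * fderiv ℝ u (ξ, s) (1, 0) +
        b (ξ, s) * u (ξ, s) = f (ξ, s) := by
    intro ξ hξ s
    have h := hpde ξ hξ s
    rwa [(hut ξ s).deriv, (hux ξ s).deriv] at h
  have hsplit : ∀ p : ℝ × ℝ, ∀ s : ℝ,
      fderiv ℝ u p (1, s) = fderiv ℝ u p (1, 0) + s * fderiv ℝ u p (0, 1) := by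
    intro p s
    have h : ((1:ℝ), s) = ((1:ℝ), (0:ℝ)) + s • ((0:ℝ), (1:ℝ)) := by
      simp [Prod.ext_iff]
    rw [h, map_add, map_smul, smul_eq_mul]
  -- derivative of u along the characteristic
  have hV : ∀ ξ ∈ Icc (0:ℝ) 1,
      HasDerivAt (fun ξ' => u (ξ', ω ξ' x t))
        (fderiv ℝ u (ξ, ω ξ x t) (1, 1 / a (ξ, ω ξ x t))) ξ := by
    intro ξ hξ
    exact (hud (ξ, ω ξ x t)).hasFDerivAt.comp_hasDerivAt ξ
      ((hasDerivAt_id ξ).prodMk (hW ξ hξ))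
  set D : ℝ → ℝ := fun ξ => (Real.exp (F ξ) / a (ξ, ω ξ x t)) * f (ξ, ω ξ x t) with hDdef
  set g : ℝ → ℝ := fun ξ => Real.exp (F ξ) * u (ξ, ω ξ x t) with hgdef
  have hg : ∀ ξ ∈ Icc (0:ℝ) 1, HasDerivAt g (D ξ) ξ := by
    intro ξ hξ
    have h := ((hFd ξ).exp.mul (hV ξ hξ))
    have harith : Real.exp (F ξ) * q ξ * u (ξ, ω ξ x t) +
        Real.exp (F ξ) * fderiv ℝ u (ξ, ω ξ x t) (1, 1 / a (ξ, ω ξ x t)) = D ξ := by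
      rw [hsplit, ← hqeq ξ hξ]
      have hp := hpde' ξ hξ (ω ξ x t)
      simp only [hDdef]
      rw [← hp]
      field_simp [hane (ξ, ω ξ x t)]
      ring
    exact harith ▸ h
  have hsub : uIcc (0:ℝ) x ⊆ Icc 0 1 := uIcc_subset_Icc ⟨le_rfl, zero_le_one⟩ hx
  -- integrability of D on [0, x]
  have hWc' : ContinuousOn (fun ξ => ω ξ x t) (uIcc (0:ℝ) x) := hWc.mono hsub
  have hDc : ContinuousOn D (uIcc (0:ℝ) x) := by
    apply ContinuousOn.mul
    · exact (hFc.continuousOn.rexp).div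
        (ha.continuous.comp_continuousOn (continuousOn_id.prodMk hWc')) (fun ξ _ => hane _)
    · exact hf.comp_continuousOn (continuousOn_id.prodMk hWc')
  have key : ∫ ξ in (0:ℝ)..x, D ξ = g x - g 0 :=
    intervalIntegral.integral_eq_sub_of_hasDerivAt (fun ξ hξ => hg ξ (hsub hξ))
      hDc.intervalIntegrable
  have e1 : (∫ η in x..(0:ℝ), b (η, ω η x t) / a (η, ω η x t)) = F 0 :=
    hint 0 ⟨le_rfl, zero_le_one⟩
  have e2 : (∫ ξ in (0:ℝ)..x,
      (Real.exp (∫ η in x..ξ, b (η, ω η x t) / a (η, ω η x t)) /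
        a (ξ, ω ξ x t)) * f (ξ, ω ξ x t)) = ∫ ξ in (0:ℝ)..x, D ξ := by
    apply intervalIntegral.integral_congr
    intro ξ hξ
    show (Real.exp (∫ η in x..ξ, b (η, ω η x t) / a (η, ω η x t)) /
        a (ξ, ω ξ x t)) * f (ξ, ω ξ x t) = D ξ
    rw [hint ξ (hsub hξ), hDdef]
  have hgx : g x = u (x, t) := by
    have hFx : F x = 0 := intervalIntegral.integral_same
    simp only [hgdef, hFx, Real.exp_zero, one_mul, hinit x hx t]
  have hg0 : g 0 = Real.exp (F 0) * u (0, ω 0 x t) := rfl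
  rw [e1, e2]
  linarith [key]
end
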